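/- For any n×n positive definite complex matrix A, the matrix logarithm has the integral representation log A = ∫₀^∞ ((1/(1+s))·I − (A + s·I)⁻¹) ds. -/

import Mathlib

open Matrix MeasureTheory
open scoped ComplexOrder

/-- Matrix logarithm on the support: apply `Real.log` (which is `0` at `0`) to the
eigenvalues of a Hermitian matrix via functional calculus; junk value `0` otherwise. -/
noncomputable def mlog {n : Type*} [Fintype n] [DecidableEq n] (A : Matrix n n ℂ) :
    Matrix n n ℂ :=
  if hA : A.IsHermitian then hA.cfc Real.log else 0

/-- Quantum relative entropy `S(A‖B) = Tr A (log A - log B)`. -/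
noncomputable def qRelEnt {n : Type*} [Fintype n] [DecidableEq n] (A B : Matrix n n ℂ) : ℝ :=
  ((A * (mlog A - mlog B)).trace).re

/-- Square root of a positive semidefinite matrix, as `Matrix.PosSemidef.sqrt` was defined in the
older Mathlib (since removed). -/
noncomputable def psdSqrt {n : Type*} [Fintype n] [DecidableEq n] {A : Matrix n n ℂ}
    (hA : A.PosSemidef) : Matrix n n ℂ :=
  hA.1.eigenvectorUnitary.1 * diagonal ((↑) ∘ (√·) ∘ hA.1.eigenvalues) *
    (star hA.1.eigenvectorUnitary : Matrix n n ℂ)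

theorem psdSqrt_isHermitian {n : Type*} [Fintype n] [DecidableEq n] {A : Matrix n n ℂ}
    (hA : A.PosSemidef) : (psdSqrt hA).IsHermitian := by
  have h := isHermitian_mul_mul_conjTranspose (hA.1.eigenvectorUnitary : Matrix n n ℂ)
    (isHermitian_diagonal_of_self_adjoint
      (((↑) : ℝ → ℂ) ∘ (√·) ∘ hA.1.eigenvalues) (funext fun i => Complex.conj_ofReal _))
  simpa [psdSqrt, star_eq_conjTranspose] using h

/-- Trace norm `‖X‖₁ = Tr √(Xᴴ X)`. -/
noncomputable def traceNorm {n : Type*} [Fintype n] [DecidableEq n] (X : Matrix n n ℂ) : ℝ :=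
  ((psdSqrt (Matrix.posSemidef_conjTranspose_mul_self X)).trace).re

/-- Smallest eigenvalue of a Hermitian matrix (junk value `0` otherwise). -/
noncomputable def lamMin {n : Type*} [Fintype n] [DecidableEq n] (A : Matrix n n ℂ) : ℝ :=
  if hA : A.IsHermitian then ⨅ i, hA.eigenvalues i else 0

/-- Largest eigenvalue of a Hermitian matrix (junk value `0` otherwise). -/
noncomputable def lamMax {n : Type*} [Fintype n] [DecidableEq n] (A : Matrix n n ℂ) : ℝ :=
  if hA : A.IsHermitian then ⨆ i, hA.eigenvalues i else 0

/-- Operator norm: largest eigenvalue of `√(Xᴴ X)` (largest singular value). -/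
noncomputable def opNorm {n : Type*} [Fintype n] [DecidableEq n] (X : Matrix n n ℂ) : ℝ :=
  ⨆ i, (psdSqrt_isHermitian (Matrix.posSemidef_conjTranspose_mul_self X)).eigenvalues i

open Filter in
private lemma scalar_key (x : ℝ) (hx : 0 < x) :
    IntegrableOn (fun s => (1+s)⁻¹ - (x+s)⁻¹) (Set.Ioi (0:ℝ)) ∧
    ∫ s in Set.Ioi (0:ℝ), ((1+s)⁻¹ - (x+s)⁻¹) = Real.log x := by
  set F : ℝ → ℝ := fun s => Real.log (1+s) - Real.log (x+s) with hF
  have hderiv : ∀ s ∈ Set.Ici (0:ℝ), HasDerivAt F ((1+s)⁻¹ - (x+s)⁻¹) s := by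
    intro s hs
    have h1 : (0:ℝ) < 1 + s := by linarith [hs.out]
    have h2 : (0:ℝ) < x + s := by linarith [hs.out]
    have d1 : HasDerivAt (fun s : ℝ => Real.log (1+s)) ((1+s)⁻¹) s := by
      simpa using (((hasDerivAt_id s).const_add 1).log h1.ne')
    have d2 : HasDerivAt (fun s : ℝ => Real.log (x+s)) ((x+s)⁻¹) s := by
      simpa using (((hasDerivAt_id s).const_add x).log h2.ne')
    exact d1.sub d2
  have hderiv' : ∀ s ∈ Set.Ioi (0:ℝ), HasDerivAt F ((1+s)⁻¹ - (x+s)⁻¹) s :=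
    fun s hs => hderiv s (Set.mem_Ici.mpr (le_of_lt hs))
  have hcont : ContinuousWithinAt F (Set.Ici 0) 0 :=
    (hderiv 0 Set.self_mem_Ici).continuousAt.continuousWithinAt
  have hlim : Tendsto F atTop (nhds 0) := by
    have h1 : Tendsto (fun s : ℝ => 1 + (1-x)/(x+s)) atTop (nhds 1) := by
      have : Tendsto (fun s : ℝ => (1-x)/(x+s)) atTop (nhds 0) :=
        Tendsto.div_atTop tendsto_const_nhds (tendsto_atTop_add_const_left _ x tendsto_id)
      simpa using tendsto_const_nhds.add this
    have h2 : Tendsto (fun s : ℝ => (1+s)/(x+s)) atTop (nhds 1) := by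
      refine h1.congr' ?_
      filter_upwards [eventually_gt_atTop 0] with s hs
      have h2 : (0:ℝ) < x + s := by linarith
      field_simp
      ring
    have h3 : Tendsto (fun s : ℝ => Real.log ((1+s)/(x+s))) atTop (nhds 0) := by
      have := (Real.continuousAt_log (one_ne_zero)).tendsto.comp h2
      simpa [Function.comp_def] using this
    refine h3.congr' ?_
    filter_upwards [eventually_gt_atTop 0] with s hs
    rw [Real.log_div (by linarith) (by linarith)]
  have hint : IntegrableOn (fun s => (1+s)⁻¹ - (x+s)⁻¹) (Set.Ioi (0:ℝ)) := by
    rcases le_or_gt 1 x with h1x | h1x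
    · refine integrableOn_Ioi_deriv_of_nonneg hcont hderiv' (fun s hs => ?_) hlim
      have h2 : (0:ℝ) < 1 + s := by linarith [hs.out]
      have : (x+s)⁻¹ ≤ (1+s)⁻¹ := by
        apply inv_anti₀ h2; linarith
      linarith
    · have hcont' : ContinuousWithinAt (fun s => -F s) (Set.Ici 0) 0 := hcont.neg
      have hderiv'' : ∀ s ∈ Set.Ioi (0:ℝ),
          HasDerivAt (fun s => -F s) (-((1+s)⁻¹ - (x+s)⁻¹)) s :=
        fun s hs => (hderiv' s hs).neg
      have hlim' : Tendsto (fun s => -F s) atTop (nhds 0) := by simpa using hlim.neg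
      have hnn : ∀ s ∈ Set.Ioi (0:ℝ), 0 ≤ -((1+s)⁻¹ - (x+s)⁻¹) := by
        intro s hs
        have h2 : (0:ℝ) < x + s := by linarith [hs.out]
        have : (1+s)⁻¹ ≤ (x+s)⁻¹ := by
          apply inv_anti₀ h2; linarith
        linarith
      have := integrableOn_Ioi_deriv_of_nonneg hcont' hderiv'' hnn hlim'
      have h := this.neg
      refine h.congr (Filter.Eventually.of_forall fun s => ?_)
      simp
  refine ⟨hint, ?_⟩
  have := integral_Ioi_of_hasDerivAt_of_tendsto hcont hderiv' hint hlim
  rw [this]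
  simp [F, Real.log_one]

/-- Integral representation of the matrix logarithm of a positive definite matrix
(entrywise integral). -/
theorem mlog_eq_integral {n : Type*} [Fintype n] [DecidableEq n]
    (A : Matrix n n ℂ) (hA : A.PosDef) :
    mlog A = Matrix.of (fun i j => ∫ s in Set.Ioi (0 : ℝ),
      ((((1 / (1 + s) : ℝ)) : ℂ) • (1 : Matrix n n ℂ) - (A + (s : ℂ) • 1)⁻¹) i j) := by
  have hH : A.IsHermitian := hA.1
  set U : Matrix n n ℂ := (hH.eigenvectorUnitary : Matrix n n ℂ) with hUdef
  set lam : n → ℝ := hH.eigenvalues with hlamdef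
  have hU1 : U * star U = 1 := Matrix.mem_unitaryGroup_iff.mp (hH.eigenvectorUnitary).2
  have hU2 : star U * U = 1 := Matrix.mem_unitaryGroup_iff'.mp (hH.eigenvectorUnitary).2
  have hlampos : ∀ k, 0 < lam k := fun k => hA.eigenvalues_pos k
  -- entry formula for conjugated diagonals
  have entry : ∀ (D : n → ℂ) (i j : n),
      (U * Matrix.diagonal D * star U) i j = ∑ k, U i k * D k * (star U) k j := by
    intro D i j
    rw [Matrix.mul_apply]
    simp only [Matrix.mul_diagonal]
  -- scalar multiples of the identity
  have hsmul : ∀ c : ℂ, c • (1 : Matrix n n ℂ) = U * Matrix.diagonal (fun _ => c) * star U := by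
    intro c
    have : U * Matrix.diagonal (fun _ : n => c) * star U = c • (1 : Matrix n n ℂ) := by
      rw [← Matrix.smul_one_eq_diagonal, Matrix.mul_smul, mul_one, Matrix.smul_mul, hU1]
    exact this.symm
  -- sums and products of conjugated diagonals
  have conj_add : ∀ D E : n → ℂ,
      U * Matrix.diagonal D * star U + U * Matrix.diagonal E * star U
        = U * Matrix.diagonal (fun k => D k + E k) * star U := by
    intro D E
    rw [show Matrix.diagonal (fun k => D k + E k) = Matrix.diagonal D + Matrix.diagonal E by
      rw [Matrix.diagonal_add]]
    rw [Matrix.mul_add, Matrix.add_mul]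
  have conj_sub : ∀ D E : n → ℂ,
      U * Matrix.diagonal D * star U - U * Matrix.diagonal E * star U
        = U * Matrix.diagonal (fun k => D k - E k) * star U := by
    intro D E
    rw [show Matrix.diagonal (fun k => D k - E k) = Matrix.diagonal D - Matrix.diagonal E by
      rw [Matrix.diagonal_sub]]
    rw [Matrix.mul_sub, Matrix.sub_mul]
  have conj_mul : ∀ D E : n → ℂ,
      (U * Matrix.diagonal D * star U) * (U * Matrix.diagonal E * star U)
        = U * Matrix.diagonal (fun k => D k * E k) * star U := by
    intro D E
    have h1 : (U * Matrix.diagonal D * star U) * (U * Matrix.diagonal E * star U)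
        = U * (Matrix.diagonal D * (star U * U) * Matrix.diagonal E) * star U := by
      simp only [Matrix.mul_assoc]
    rw [h1, hU2, Matrix.mul_one, Matrix.diagonal_mul_diagonal]
  -- mlog as conjugated diagonal
  have hmlog : mlog A = U * Matrix.diagonal (fun k => ((Real.log (lam k) : ℝ) : ℂ)) * star U := by
    rw [mlog, dif_pos hH]
    rfl
  -- key pointwise identity for the integrand
  have key : ∀ s ∈ Set.Ioi (0:ℝ), ∀ i j,
      ((((1 / (1 + s) : ℝ)) : ℂ) • (1 : Matrix n n ℂ) - (A + (s : ℂ) • 1)⁻¹) i j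
        = ∑ k, (U i k * (star U) k j) * ((((1+s)⁻¹ - (lam k + s)⁻¹ : ℝ)) : ℂ) := by
    intro s hs i j
    have hs0 : (0:ℝ) < s := hs
    have hA1 : A + (s:ℂ) • 1
        = U * Matrix.diagonal (fun k => (((lam k + s : ℝ)) : ℂ)) * star U := by
      conv_lhs => rw [hH.spectral_theorem, hsmul ((s:ℂ))]
      rw [Unitary.conjStarAlgAut_apply, ← hUdef, ← hlamdef, conj_add]
      congr 2
      funext k
      push_cast
      simp [Function.comp]
    have hinv : (A + (s:ℂ) • 1)⁻¹
        = U * Matrix.diagonal (fun k => ((((lam k + s : ℝ)⁻¹ : ℝ)) : ℂ)) * star U := by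
      rw [hA1]
      apply Matrix.inv_eq_right_inv
      rw [conj_mul]
      have hd : (fun k => ((((lam k + s : ℝ)) : ℂ) * (((lam k + s : ℝ)⁻¹ : ℝ) : ℂ)))
          = fun _ : n => (1:ℂ) := by
        funext k
        rw [← Complex.ofReal_mul, mul_inv_cancel₀ (by have := hlampos k; linarith : (0:ℝ) < lam k + s).ne']
        simp
      rw [hd, Matrix.diagonal_one, Matrix.mul_one, hU1]
    rw [hinv, hsmul, conj_sub, entry]
    refine Finset.sum_congr rfl fun k _ => ?_
    have : ((1 / (1 + s) : ℝ) : ℂ) - (((lam k + s : ℝ)⁻¹ : ℝ) : ℂ)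
        = ((((1+s)⁻¹ - (lam k + s)⁻¹ : ℝ)) : ℂ) := by
      push_cast
      rw [one_div]
    rw [this]
    ring
  -- now compute the integral entrywise
  ext i j
  rw [Matrix.of_apply]
  rw [setIntegral_congr_fun measurableSet_Ioi (fun s hs => key s hs i j)]
  have hInt : ∀ k : n, IntegrableOn
      (fun s : ℝ => (U i k * (star U) k j) * ((((1+s)⁻¹ - (lam k + s)⁻¹ : ℝ)) : ℂ))
      (Set.Ioi (0:ℝ)) := by
    intro k
    exact ((scalar_key (lam k) (hlampos k)).1.ofReal).const_mul _
  rw [integral_finset_sum _ (fun k _ => hInt k)]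
  have hval : ∀ k : n,
      (∫ s in Set.Ioi (0:ℝ),
        (U i k * (star U) k j) * ((((1+s)⁻¹ - (lam k + s)⁻¹ : ℝ)) : ℂ))
      = (U i k * (star U) k j) * ((Real.log (lam k) : ℝ) : ℂ) := by
    intro k
    rw [MeasureTheory.integral_const_mul]
    have h2 : ∫ s in Set.Ioi (0:ℝ), ((((1+s)⁻¹ - (lam k + s)⁻¹ : ℝ)) : ℂ)
        = (((∫ s in Set.Ioi (0:ℝ), ((1+s)⁻¹ - (lam k + s)⁻¹) : ℝ)) : ℂ) :=
      integral_ofReal (𝕜 := ℂ)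
    rw [h2, (scalar_key (lam k) (hlampos k)).2]
  simp_rw [hval]
  rw [hmlog, entry]
  refine Finset.sum_congr rfl fun k _ => ?_
  ring
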